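/- For i = 1,…,N let E(i) be an m_i×n_i real matrix of rank r_i with SVD-partition U(i) = [U₁(i) U₂(i)], V(i) = [V₁(i) V₂(i)], S(i), and let B_x(i) (m_i×u_i), B_z(i) (z_i×u_i), A_xv(i) (m_i×v_i), A_zv(i) (z_i×v_i) be real matrices. Form the block-diagonal matrices E = diag{E(i)}, B_x = diag{B_x(i)}, B_z = diag{B_z(i)}, A_xv = diag{A_xv(i)}, A_zv = diag{A_zv(i)}, U₂ = diag{U₂(i)}. Assume that for each i ∈ {1,…,N} the stacked matrix col{U₂(i)ᵀ·B_x(i), B_z(i)} has full row rank. Then for every real matrix Φ (of size Σᵢ v_i × Σᵢ z_i) such that I − A_zv·Φ is invertible, the matrix [E B] has full row rank, where B = B_x + A_xv·Φ·(I − A_zv·Φ)⁻¹·B_z. -/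

import Mathlib

open Matrix

noncomputable section

/-- A real matrix has full column rank (FCR) iff its rank equals its number of columns. -/
def FCR {m n : Type*} [Fintype m] [Fintype n] (A : Matrix m n ℝ) : Prop :=
  A.rank = Fintype.card n

/-- A real matrix has full row rank (FRR) iff its rank equals its number of rows. -/
def FRR {m n : Type*} [Fintype m] [Fintype n] (A : Matrix m n ℝ) : Prop :=
  A.rank = Fintype.card m

/-- `E` is an `m × n` real matrix of rank `r` with SVD-partition
`U = [U₁ U₂]`, `V = [V₁ V₂]`, `S`: the matrices `U = [U₁ U₂]` and `V = [V₁ V₂]` are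
orthogonal, `S` is an `r × r` diagonal matrix with positive diagonal entries,
and `E = U₁ * S * V₁ᵀ`. -/
def IsSVDPartition {m n r : ℕ} (E : Matrix (Fin m) (Fin n) ℝ)
    (U₁ : Matrix (Fin m) (Fin r) ℝ) (U₂ : Matrix (Fin m) (Fin (m - r)) ℝ)
    (V₁ : Matrix (Fin n) (Fin r) ℝ) (V₂ : Matrix (Fin n) (Fin (n - r)) ℝ)
    (S : Matrix (Fin r) (Fin r) ℝ) : Prop :=
  r ≤ m ∧ r ≤ n ∧
    (Matrix.fromCols U₁ U₂)ᵀ * Matrix.fromCols U₁ U₂ = 1 ∧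
    (Matrix.fromCols V₁ V₂)ᵀ * Matrix.fromCols V₁ V₂ = 1 ∧
    (∃ d : Fin r → ℝ, (∀ i, 0 < d i) ∧ S = Matrix.diagonal d) ∧
    E = U₁ * S * V₁ᵀ ∧ E.rank = r


/-- FRR is equivalent to triviality of the left null space. -/
lemma frr_iff_vecMul' {m n : Type*} [Fintype m] [Fintype n] (A : Matrix m n ℝ) :
    A.rank = Fintype.card m ↔ ∀ x : m → ℝ, x ᵥ* A = 0 → x = 0 := by
  have h1 : A.rank = Fintype.card m ↔ LinearIndependent ℝ A.row := by
    rw [Matrix.rank_eq_finrank_span_row, linearIndependent_iff_card_eq_finrank_span,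
      Set.finrank, eq_comm]
  rw [h1, ← Matrix.vecMul_injective_iff, ← Matrix.coe_vecMulLinear,
    injective_iff_map_eq_zero]
  simp only [Matrix.vecMulLinear_apply]

lemma vecMul_blockDiagonal'_apply {N : ℕ} {p q : Fin N → ℕ}
    (M : ∀ i, Matrix (Fin (p i)) (Fin (q i)) ℝ)
    (y : ((i : Fin N) × Fin (p i)) → ℝ) (i : Fin N) (j : Fin (q i)) :
    (y ᵥ* Matrix.blockDiagonal' M) ⟨i, j⟩ = ((fun k => y ⟨i, k⟩) ᵥ* M i) j := by
  simp only [Matrix.vecMul, dotProduct]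
  rw [← Finset.univ_sigma_univ, Finset.sum_sigma]
  rw [Finset.sum_eq_single i]
  · simp [Matrix.blockDiagonal'_apply_eq]
  · intro b _ hb
    apply Finset.sum_eq_zero
    intro j' _
    rw [Matrix.blockDiagonal'_apply_ne _ _ _ hb, mul_zero]
  · simp

/-- Corollary 1, second part: if for each subsystem `i` the matrix
`col{U₂(i)ᵀ·B_x(i), B_z(i)}` has full row rank, then for every `Φ` with
`I − A_zv·Φ` invertible, the global matrix `[E  B]` with
`B = B_x + A_xv·Φ·(I − A_zv·Φ)⁻¹·B_z` has full row rank. -/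
theorem frr_of_subsystem_conditions (N : ℕ) (m n r u v z : Fin N → ℕ)
    (E : ∀ i, Matrix (Fin (m i)) (Fin (n i)) ℝ)
    (U₁ : ∀ i, Matrix (Fin (m i)) (Fin (r i)) ℝ)
    (U₂ : ∀ i, Matrix (Fin (m i)) (Fin (m i - r i)) ℝ)
    (V₁ : ∀ i, Matrix (Fin (n i)) (Fin (r i)) ℝ)
    (V₂ : ∀ i, Matrix (Fin (n i)) (Fin (n i - r i)) ℝ)
    (S : ∀ i, Matrix (Fin (r i)) (Fin (r i)) ℝ)
    (hsvd : ∀ i, IsSVDPartition (E i) (U₁ i) (U₂ i) (V₁ i) (V₂ i) (S i))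
    (Bx : ∀ i, Matrix (Fin (m i)) (Fin (u i)) ℝ)
    (Bz : ∀ i, Matrix (Fin (z i)) (Fin (u i)) ℝ)
    (Axv : ∀ i, Matrix (Fin (m i)) (Fin (v i)) ℝ)
    (Azv : ∀ i, Matrix (Fin (z i)) (Fin (v i)) ℝ)
    (hsub : ∀ i, FRR (Matrix.fromRows ((U₂ i)ᵀ * Bx i) (Bz i))) :
    ∀ Φ : Matrix ((i : Fin N) × Fin (v i)) ((i : Fin N) × Fin (z i)) ℝ,
      IsUnit (1 - Matrix.blockDiagonal' Azv * Φ) →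
      FRR (Matrix.fromCols (Matrix.blockDiagonal' E)
        (Matrix.blockDiagonal' Bx + Matrix.blockDiagonal' Axv * Φ *
          (1 - Matrix.blockDiagonal' Azv * Φ)⁻¹ * Matrix.blockDiagonal' Bz)) := by
  intro Φ _hΦ
  rw [FRR, frr_iff_vecMul']
  intro y hy
  rw [Matrix.vecMul_fromCols] at hy
  have hyE : y ᵥ* Matrix.blockDiagonal' E = 0 := funext fun j => congrFun hy (Sum.inl j)
  set Ξ : Matrix ((i : Fin N) × Fin (m i)) ((i : Fin N) × Fin (z i)) ℝ :=
    Matrix.blockDiagonal' Axv * Φ * (1 - Matrix.blockDiagonal' Azv * Φ)⁻¹ with hΞ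
  set ξ : ((i : Fin N) × Fin (z i)) → ℝ := y ᵥ* Ξ with hξ
  have hyB : y ᵥ* Matrix.blockDiagonal' Bx + ξ ᵥ* Matrix.blockDiagonal' Bz = 0 := by
    have h0 : y ᵥ* (Matrix.blockDiagonal' Bx + Ξ * Matrix.blockDiagonal' Bz) = 0 :=
      funext fun j => congrFun hy (Sum.inr j)
    rw [Matrix.vecMul_add, ← Matrix.vecMul_vecMul] at h0
    exact h0
  funext p
  obtain ⟨i, j⟩ := p
  set yi : Fin (m i) → ℝ := fun k => y ⟨i, k⟩ with hyidef
  set ξi : Fin (z i) → ℝ := fun k => ξ ⟨i, k⟩ with hξidef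
  obtain ⟨hrm, hrn, hU, hV, ⟨d, hd, hS⟩, hE, -⟩ := hsvd i
  -- per-block equation from y ᵥ* E = 0
  have hEi : yi ᵥ* E i = 0 := by
    funext jj
    have h := congrFun hyE ⟨i, jj⟩
    rwa [vecMul_blockDiagonal'_apply] at h
  -- V₁ᵀ V₁ = 1
  have hV11 : (V₁ i)ᵀ * V₁ i = 1 := by
    rw [Matrix.transpose_fromCols, Matrix.fromRows_mul_fromCols] at hV
    have h := congrArg Matrix.toBlocks₁₁ hV
    rw [Matrix.toBlocks_fromBlocks₁₁] at h
    rw [h]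
    ext a b
    simp [Matrix.toBlocks₁₁, Matrix.one_apply]
  -- y ᵥ* U₁ S = 0
  have h1 : yi ᵥ* (U₁ i * S i) = 0 := by
    have h := congrArg (fun w => w ᵥ* V₁ i) hEi
    simp only [Matrix.zero_vecMul] at h
    rwa [hE, Matrix.vecMul_vecMul, Matrix.mul_assoc (U₁ i * S i), hV11, Matrix.mul_one] at h
  -- y ᵥ* U₁ = 0
  have h2 : yi ᵥ* U₁ i = 0 := by
    funext k
    have h := congrFun h1 k
    rw [hS, ← Matrix.vecMul_vecMul, Matrix.vecMul_diagonal] at h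
    rcases mul_eq_zero.mp h with h' | h'
    · exact h'
    · exact absurd h' (hd k).ne' 
  -- U Uᵀ = 1
  have e : Fin (r i) ⊕ Fin (m i - r i) ≃ Fin (m i) :=
    finSumFinEquiv.trans (finCongr (Nat.add_sub_cancel' hrm))
  have hUU : Matrix.fromCols (U₁ i) (U₂ i) * (Matrix.fromCols (U₁ i) (U₂ i))ᵀ = 1 :=
    (Matrix.mul_eq_one_comm_of_equiv e).mp hU
  -- yi lies in the column space of U₂
  have hyi : yi = (yi ᵥ* U₂ i) ᵥ* (U₂ i)ᵀ := by
    have h : yi ᵥ* (Matrix.fromCols (U₁ i) (U₂ i) * (Matrix.fromCols (U₁ i) (U₂ i))ᵀ)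
        = yi := by rw [hUU, Matrix.vecMul_one]
    rw [← Matrix.vecMul_vecMul, Matrix.vecMul_fromCols, h2,
      Matrix.transpose_fromCols, Matrix.sumElim_vecMul_fromRows, Matrix.zero_vecMul,
      zero_add] at h
    exact h.symm
  -- per-block equation from y ᵥ* B = 0
  have hBi : yi ᵥ* Bx i + ξi ᵥ* Bz i = 0 := by
    funext kk
    have h := congrFun hyB ⟨i, kk⟩
    simp only [Pi.add_apply, Pi.zero_apply] at h ⊢
    rwa [vecMul_blockDiagonal'_apply, vecMul_blockDiagonal'_apply] at h
  -- apply the subsystem FRR hypothesis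
  have hkey : Sum.elim (yi ᵥ* U₂ i) ξi ᵥ* Matrix.fromRows ((U₂ i)ᵀ * Bx i) (Bz i) = 0 := by
    rw [Matrix.sumElim_vecMul_fromRows, ← Matrix.vecMul_vecMul, ← hyi]
    exact hBi
  have hz := (frr_iff_vecMul' _).mp (hsub i) _ hkey
  have hw : yi ᵥ* U₂ i = 0 := funext fun k => congrFun hz (Sum.inl k)
  have : yi = 0 := by rw [hyi, hw, Matrix.zero_vecMul]
  exact congrFun this j
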